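/- Let h : ℝ → ℝ be r-times differentiable, p₁,…,p_r > 0, and recursively define v₀ = h and v_i = v̇_{i−1} + p_i v_{i−1} for 1 ≤ i ≤ r. If v_r(t) ≥ 0 for all t ≥ 0 and v_i(0) ≥ 0 for all 0 ≤ i ≤ r−1, then h(t) ≥ 0 for all t ≥ 0. -/

import Mathlib

lemma aux_gronwall (f : ℝ → ℝ) (hf : Differentiable ℝ f) (c : ℝ)
    (h0 : 0 ≤ f 0) (hd : ∀ t ≥ (0:ℝ), 0 ≤ deriv f t + c * f t) :
    ∀ t ≥ (0:ℝ), 0 ≤ f t := by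
  intro t ht
  set g : ℝ → ℝ := fun t => Real.exp (c * t) * f t with hg
  have key : ∀ x, HasDerivAt g (Real.exp (c * x) * (deriv f x + c * f x)) x := by
    intro x
    have h1 : HasDerivAt (fun t => Real.exp (c * t)) (c * Real.exp (c * x)) x := by
      exact ((Real.hasDerivAt_exp (c * x)).comp x
        ((hasDerivAt_id x).const_mul c)).congr_deriv (by simp only [id, mul_one]; ring)
    have : HasDerivAt g (c * Real.exp (c * x) * f x + Real.exp (c * x) * deriv f x) x :=
      h1.mul (hf x).hasDerivAt
    convert this using 1
    ring
  have mono : MonotoneOn g (Set.Ici (0:ℝ)) := by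
    apply monotoneOn_of_deriv_nonneg (convex_Ici 0)
    · exact fun x _ => (key x).continuousAt.continuousWithinAt
    · exact fun x _ => (key x).differentiableAt.differentiableWithinAt
    · intro x hx
      rw [interior_Ici] at hx
      rw [(key x).deriv]
      exact mul_nonneg (Real.exp_pos _).le (hd x (le_of_lt hx))
  have hle : g 0 ≤ g t := mono (Set.self_mem_Ici) ht ht
  have hg0 : g 0 = f 0 := by simp [hg]
  have hgt : 0 ≤ Real.exp (c * t) * f t := by
    rw [hg0] at hle; exact le_trans h0 hle
  nlinarith [Real.exp_pos (c * t)]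

theorem stmt6 (r : ℕ) (hr : 1 ≤ r) (h : ℝ → ℝ) (hdiff : ContDiff ℝ (r : ℕ∞) h)
    (p : ℕ → ℝ) (hp : ∀ i, 1 ≤ i → i ≤ r → 0 < p i)
    (v : ℕ → ℝ → ℝ) (hv0 : v 0 = h)
    (hvi : ∀ i, 1 ≤ i → i ≤ r → v i = fun t => deriv (v (i - 1)) t + p i * v (i - 1) t)
    (hcond : ∀ t ≥ (0:ℝ), v r t ≥ 0)
    (hinit : ∀ i ≤ r - 1, v i 0 ≥ 0) :
    ∀ t ≥ (0:ℝ), h t ≥ 0 := by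
  -- smoothness of each v i
  have smooth : ∀ i ≤ r, ContDiff ℝ ((r - i : ℕ) : ℕ∞) (v i) := by
    intro i
    induction i with
    | zero => intro _; simpa [hv0] using hdiff
    | succ n ih =>
      intro hn
      have hn' : n ≤ r := Nat.le_of_succ_le hn
      have hrn : r - n = (r - (n + 1)) + 1 := by omega
      have hvn := ih hn'
      rw [show (((r - n : ℕ) : ℕ∞) : WithTop ℕ∞) = (((r - (n+1) : ℕ) : ℕ∞) : WithTop ℕ∞) + 1
        by rw [hrn]; push_cast; ring] at hvn
      obtain ⟨hd1, -, hdn⟩ := contDiff_succ_iff_deriv.mp hvn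
      have h1 : ContDiff ℝ ((r - (n+1) : ℕ) : ℕ∞) (v n) :=
        hvn.of_le (by exact_mod_cast le_self_add)
      rw [hvi (n+1) (Nat.succ_le_succ (Nat.zero_le _)) hn]
      simpa using (hdn.add (contDiff_const.mul h1))
  -- downward induction on nonnegativity
  have nonneg : ∀ j ≤ r, ∀ t ≥ (0:ℝ), 0 ≤ v (r - j) t := by
    intro j
    induction j with
    | zero => intro _ t ht; simpa using hcond t ht
    | succ n ih =>
      intro hn t ht
      have hn' : n ≤ r := Nat.le_of_succ_le hn
      set i := r - (n + 1) with hi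
      have hisucc : i + 1 = r - n := by omega
      have hle : i ≤ r := by omega
      have hd : Differentiable ℝ (v i) := by
        have := smooth i hle
        exact this.differentiable (by exact_mod_cast (by omega : r - i ≠ 0))
      have h0 : 0 ≤ v i 0 := hinit i (by omega)
      have hrec : ∀ s ≥ (0:ℝ), 0 ≤ deriv (v i) s + p (i+1) * v i s := by
        intro s hs
        have := ih hn' s hs
        rw [← hisucc] at this
        rw [hvi (i+1) (Nat.succ_le_succ (Nat.zero_le _)) (by omega)] at this
        simpa using this
      exact aux_gronwall (v i) hd (p (i+1)) h0 hrec t ht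
  intro t ht
  have := nonneg r le_rfl t ht
  simpa [hv0] using this
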